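/- Let R be a commutative ring and M a free R-module of rank n, and let 0 ≤ i ≤ n. The exterior multiplication map Λ^i M ⊗_R Λ^{n-i} M → Λ^n M induces an isomorphism of R-modules Λ^i M ≅ Hom_R(Λ^{n-i} M, Λ^n M). -/

import Mathlib

open ExteriorAlgebra

/-- Exterior multiplication `⋀^i M ⊗ ⋀^j M → ⋀^(i+j) M`, as a bilinear map. -/
noncomputable def exteriorPowerWedge (R M : Type*) [CommRing R] [AddCommGroup M]
    [Module R M] (i j : ℕ) :
    ⋀[R]^i M →ₗ[R] ⋀[R]^j M →ₗ[R] ⋀[R]^(i + j) M :=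
  LinearMap.mk₂ R
    (fun x y =>
      ⟨(x : ExteriorAlgebra R M) * (y : ExteriorAlgebra R M), by
        have h := Submodule.mul_mem_mul x.2 y.2
        rwa [← pow_add] at h⟩)
    (fun x x' y => Subtype.ext (by simp [add_mul]))
    (fun c x y => Subtype.ext (by simp [smul_mul_assoc]))
    (fun x y y' => Subtype.ext (by simp [mul_add]))
    (fun c x y => Subtype.ext (by simp [mul_smul_comm]))

namespace ExtDualAux

variable {R M : Type*} [CommRing R] [AddCommGroup M] [Module R M] {n : ℕ}

/-- The product of two `ιMulti`s is `ιMulti` of the appended family. -/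
theorem iMulti_mul (p q : ℕ) (u : Fin p → M) (v : Fin q → M) :
    (ιMulti R p u : ExteriorAlgebra R M) * ιMulti R q v = ιMulti R (p + q) (Fin.append u v) := by
  have h : (fun i => ι R (Fin.append u v i))
      = Fin.append (fun i => ι R (u i)) (fun i => ι R (v i)) := by
    funext i
    refine Fin.addCases (fun p => ?_) (fun p => ?_) i <;> simp [Fin.append_left, Fin.append_right]
  rw [ιMulti_apply, ιMulti_apply, ιMulti_apply, h, List.ofFn_fin_append, List.prod_append]

/-- Basis family of the `k`-th exterior power. -/
noncomputable def fam (b : Module.Basis (Fin n) R M) (k : ℕ)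
    (s : {s : Finset (Fin n) // s.card = k}) : ⋀[R]^k M :=
  ⟨ιMulti_family R k b s, ιMulti_range R k ⟨_, rfl⟩⟩

theorem fam_coe (b : Module.Basis (Fin n) R M) (k : ℕ) (s : {s : Finset (Fin n) // s.card = k}) :
    (fam b k s : ExteriorAlgebra R M)
      = ιMulti R k (fun p => b (s.1.orderEmbOfFin s.2 p)) := by
  simp [fam, ιMulti_family, Finset.coe_orderIsoOfFin_apply, Set.powersetCard.ofFinEmbEquiv_symm_apply, Function.comp_def]
  rfl

/-- spanning in the exterior algebra -/
theorem span_fam (b : Module.Basis (Fin n) R M) (k : ℕ) :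
    ⋀[R]^k M ≤ Submodule.span R (Set.range (ιMulti_family R k b)) := by
  rw [← ιMulti_span_fixedDegree]
  rw [Submodule.span_le]
  rintro _ ⟨v, rfl⟩
  have hv : ∀ p, v p = ∑ q, b.repr (v p) q • b q := fun p => (b.sum_repr (v p)).symm
  have h1 : ιMulti R k v
      = (ιMulti R k (M := M)).toMultilinearMap (fun p => ∑ q, b.repr (v p) q • b q) := by
    rw [← funext hv]; rfl
  rw [h1, MultilinearMap.map_sum]
  apply Submodule.sum_mem
  intro r _
  have h2 : ((ιMulti R k (M := M)).toMultilinearMap fun p => b.repr (v p) (r p) • b (r p))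
      = (∏ p, b.repr (v p) (r p)) • ιMulti R k (fun p => b (r p)) :=
    MultilinearMap.map_smul_univ _ _ _
  rw [h2]
  apply Submodule.smul_mem
  by_cases hr : Function.Injective r
  · have hcard : (Finset.univ.image r).card = k := by
      rw [Finset.card_image_of_injective _ hr, Finset.card_univ, Fintype.card_fin]
    set s : Finset (Fin n) := Finset.univ.image r with hs
    have hrange : Set.range r = Set.range (s.orderEmbOfFin hcard) := by
      rw [Finset.range_orderEmbOfFin]
      simp [hs]
    let e₁ : Fin k ≃ Set.range r := Equiv.ofInjective r hr
    let e₂ : Fin k ≃ Set.range (s.orderEmbOfFin hcard) :=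
      Equiv.ofInjective _ (s.orderEmbOfFin hcard).injective
    let σ : Equiv.Perm (Fin k) := (e₁.trans (Equiv.setCongr hrange)).trans e₂.symm
    have hσ : ∀ p, r p = s.orderEmbOfFin hcard (σ p) := by
      intro p
      have h2' : (s.orderEmbOfFin hcard) (e₂.symm ((Equiv.setCongr hrange) (e₁ p)))
          = ((Equiv.setCongr hrange) (e₁ p) : Fin n) :=
        Equiv.apply_ofInjective_symm _ _
      simp only [σ, Equiv.trans_apply]
      rw [h2']
      simp [e₁]
    have key : ιMulti R k (fun p => b (r p))
        = Equiv.Perm.sign σ • ιMulti R k (fun p => b (s.orderEmbOfFin hcard p)) := by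
      have := AlternatingMap.map_perm (ιMulti R k (M := M))
        (fun p => b (s.orderEmbOfFin hcard p)) σ
      rw [← this]
      congr 1
      funext p
      simp [Function.comp, hσ p]
    rw [key]
    have hmem : ιMulti R k (fun p => b ((s.orderEmbOfFin hcard) p))
        ∈ Submodule.span R (Set.range (ιMulti_family R k b)) := by
      apply Submodule.subset_span
      refine ⟨⟨s, hcard⟩, ?_⟩
      simp [ιMulti_family, Finset.coe_orderIsoOfFin_apply, Set.powersetCard.ofFinEmbEquiv_symm_apply, Function.comp_def]
    rcases Int.units_eq_one_or (Equiv.Perm.sign σ) with h | h <;> rw [h]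
    · simpa using hmem
    · simpa using Submodule.neg_mem _ hmem
  · have hnr : ¬ Function.Injective (fun p => b (r p)) := fun h => hr h.of_comp
    rw [AlternatingMap.map_eq_zero_of_not_injective _ _ hnr]
    exact Submodule.zero_mem _

/-- spanning, internal version -/
theorem span_fam_top (b : Module.Basis (Fin n) R M) (k : ℕ) :
    Submodule.span R (Set.range (fam b k)) = ⊤ := by
  rw [eq_top_iff]
  rintro x -
  have hx : (x : ExteriorAlgebra R M) ∈ Submodule.span R (Set.range (ιMulti_family R k b)) :=
    span_fam b k x.2
  have himg : Set.range (ιMulti_family R k b)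
      = (⋀[R]^k M).subtype '' (Set.range (fam b k)) := by
    rw [← Set.range_comp]
    rfl
  rw [himg, ← Submodule.map_span] at hx
  obtain ⟨y, hy, hxy⟩ := hx
  have : y = x := Subtype.ext hxy
  rwa [← this]

/-- extensionality on the spanning family -/
theorem ext_fam {N : Type*} [AddCommGroup N] [Module R N] (b : Module.Basis (Fin n) R M) (k : ℕ)
    {φ ψ : ⋀[R]^k M →ₗ[R] N} (h : ∀ s, φ (fam b k s) = ψ (fam b k s)) : φ = ψ := by
  apply LinearMap.ext_on (span_fam_top b k)
  rintro _ ⟨s, rfl⟩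
  exact h s

/-- top exterior power generator -/
noncomputable def En (b : Module.Basis (Fin n) R M) : ⋀[R]^n M :=
  ⟨ιMulti R n b, ιMulti_range R n ⟨_, rfl⟩⟩

/-- determinant functional on the top exterior power -/
noncomputable def delta (b : Module.Basis (Fin n) R M) : ⋀[R]^n M →ₗ[R] R :=
  (liftAlternating (R := R) (M := M) (Function.update 0 n b.det)).comp
    (Submodule.subtype _)

theorem delta_iMulti (b : Module.Basis (Fin n) R M) (v : Fin n → M)
    (h : ιMulti R n v ∈ ⋀[R]^n M) :
    delta b ⟨ιMulti R n v, h⟩ = b.det v := by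
  simp [delta, liftAlternating_apply_ιMulti]

theorem delta_En (b : Module.Basis (Fin n) R M) : delta b (En b) = 1 := by
  rw [En, delta_iMulti, Module.Basis.det_self]

theorem fam_univ (b : Module.Basis (Fin n) R M) (h : (Finset.univ : Finset (Fin n)).card = n) :
    fam b n ⟨Finset.univ, h⟩ = En b := by
  apply Subtype.ext
  rw [fam_coe, En]
  congr 1
  funext p
  congr 1
  exact (congrFun (Finset.orderEmbOfFin_unique h (f := id) (fun x => Finset.mem_univ x)
    strictMono_id) p).symm

/-- every element of the top exterior power is `delta x • En` -/
theorem eq_delta_smul (b : Module.Basis (Fin n) R M) (x : ⋀[R]^n M) :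
    x = delta b x • En b := by
  have key : LinearMap.id (R := R) (M := ⋀[R]^n M) = (delta b).smulRight (En b) := by
    apply ext_fam b n
    intro s
    have hs : s.1 = Finset.univ := by
      apply Finset.eq_univ_of_card
      rw [s.2, Fintype.card_fin]
    have hs' : s = ⟨Finset.univ, by rw [← hs]; exact s.2⟩ := Subtype.ext hs
    rw [hs', fam_univ]
    simp [delta_En]
  exact LinearMap.congr_fun key x

section Pairing

variable {i j : ℕ}

/-- nondisjoint pairing vanishes -/
theorem wedge_eq_zero (b : Module.Basis (Fin (i + j)) R M)
    (s : {s : Finset (Fin (i + j)) // s.card = i})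
    (t : {t : Finset (Fin (i + j)) // t.card = j}) (hst : ¬ Disjoint s.1 t.1) :
    exteriorPowerWedge R M i j (fam b i s) (fam b j t) = 0 := by
  apply Subtype.ext
  have hval : (exteriorPowerWedge R M i j (fam b i s) (fam b j t) : ExteriorAlgebra R M)
      = (fam b i s : ExteriorAlgebra R M) * (fam b j t : ExteriorAlgebra R M) := rfl
  rw [hval, fam_coe, fam_coe, iMulti_mul]
  obtain ⟨a, has, hat⟩ := Finset.not_disjoint_iff.mp hst
  have hs' : a ∈ Set.range (s.1.orderEmbOfFin s.2) := by
    rw [Finset.range_orderEmbOfFin]; exact has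
  have ht' : a ∈ Set.range (t.1.orderEmbOfFin t.2) := by
    rw [Finset.range_orderEmbOfFin]; exact hat
  obtain ⟨p, hp⟩ := hs'
  obtain ⟨q, hq⟩ := ht'
  have heq : (Fin.append (fun p => b (s.1.orderEmbOfFin s.2 p))
        (fun q => b (t.1.orderEmbOfFin t.2 q))) (Fin.castAdd j p)
      = (Fin.append (fun p => b (s.1.orderEmbOfFin s.2 p))
        (fun q => b (t.1.orderEmbOfFin t.2 q))) (Fin.natAdd i q) := by
    rw [Fin.append_left, Fin.append_right, hp, hq]
  have hne : Fin.castAdd j p ≠ Fin.natAdd i q := by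
    intro h
    have := congrArg Fin.val h
    simp only [Fin.coe_castAdd, Fin.coe_natAdd] at this
    omega
  exact AlternatingMap.map_eq_zero_of_eq _ _ heq hne

/-- the shuffle permutation associated to a subset -/
noncomputable def shuffle (s : Finset (Fin (i + j))) (hs : s.card = i)
    (ht : sᶜ.card = j) : Equiv.Perm (Fin (i + j)) :=
  Equiv.ofBijective (Fin.append (⇑(s.orderEmbOfFin hs)) (⇑(sᶜ.orderEmbOfFin ht)))
    (by
      rw [← Finite.injective_iff_bijective]
      intro a c hac
      revert hac
      refine Fin.addCases (fun p => ?_) (fun p => ?_) a <;>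
        refine Fin.addCases (fun q => ?_) (fun q => ?_) c <;>
        intro h
      · rw [Fin.append_left, Fin.append_left] at h
        exact congrArg (Fin.castAdd j) ((s.orderEmbOfFin hs).injective h)
      · rw [Fin.append_left, Fin.append_right] at h
        exact absurd (h ▸ s.orderEmbOfFin_mem hs p)
          (Finset.mem_compl.mp (sᶜ.orderEmbOfFin_mem ht q))
      · rw [Fin.append_right, Fin.append_left] at h
        exact absurd (h.symm ▸ s.orderEmbOfFin_mem hs q)
          (Finset.mem_compl.mp (sᶜ.orderEmbOfFin_mem ht p))
      · rw [Fin.append_right, Fin.append_right] at h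
        exact congrArg (Fin.natAdd i) ((sᶜ.orderEmbOfFin ht).injective h))

/-- complement pairing gives the sign times the generator -/
theorem wedge_compl (b : Module.Basis (Fin (i + j)) R M)
    (s : Finset (Fin (i + j))) (hs : s.card = i) (ht : sᶜ.card = j) :
    exteriorPowerWedge R M i j (fam b i ⟨s, hs⟩) (fam b j ⟨sᶜ, ht⟩)
      = ((Equiv.Perm.sign (shuffle s hs ht) : ℤ) : R) • En b := by
  apply Subtype.ext
  have hval : (exteriorPowerWedge R M i j (fam b i ⟨s, hs⟩) (fam b j ⟨sᶜ, ht⟩) :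
      ExteriorAlgebra R M)
      = (fam b i ⟨s, hs⟩ : ExteriorAlgebra R M) * (fam b j ⟨sᶜ, ht⟩ : ExteriorAlgebra R M) := rfl
  rw [hval, fam_coe, fam_coe, iMulti_mul]
  have happ : (Fin.append (fun p => b (s.orderEmbOfFin hs p))
        (fun q => b (sᶜ.orderEmbOfFin ht q)))
      = (fun p => b (shuffle s hs ht p)) := by
    funext a
    refine Fin.addCases (fun p => ?_) (fun p => ?_) a
    · rw [Fin.append_left]
      congr 1
      show _ = Fin.append _ _ (Fin.castAdd j p)
      rw [Fin.append_left]
    · rw [Fin.append_right]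
      congr 1
      show _ = Fin.append _ _ (Fin.natAdd i p)
      rw [Fin.append_right]
  rw [happ]
  have hperm := AlternatingMap.map_perm (ιMulti R (i + j) (M := M)) b (shuffle s hs ht)
  have hcoe : (En b : ExteriorAlgebra R M) = ιMulti R (i + j) b := rfl
  rw [show (fun p => b (shuffle s hs ht p)) = (⇑b ∘ ⇑(shuffle s hs ht)) from rfl, hperm]
  rw [Submodule.coe_smul, hcoe, Units.smul_def, Int.cast_smul_eq_zsmul]

end Pairing

end ExtDualAux

open ExtDualAux in
/-- For a free module `M` of rank `n` over a commutative ring and `i + j = n`, exterior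
multiplication induces an isomorphism `⋀^i M ≅ Hom(⋀^j M, ⋀^n M)`. -/
theorem exteriorPower_dual_of_basis {R M : Type*} [CommRing R] [AddCommGroup M] [Module R M]
    {n : ℕ} (b : Module.Basis (Fin n) R M) (i j : ℕ) (hij : i + j = n) :
    Function.Bijective (exteriorPowerWedge R M i j) := by
  subst hij
  classical
  set W := exteriorPowerWedge R M i j with hW
  -- complement maps
  have hcardc : ∀ s : Finset (Fin (i + j)), s.card = i → sᶜ.card = j := by
    intro s hs
    rw [Finset.card_compl, hs, Fintype.card_fin]
    omega
  have hcardc' : ∀ t : Finset (Fin (i + j)), t.card = j → tᶜ.card = i := by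
    intro t ht
    rw [Finset.card_compl, ht, Fintype.card_fin]
    omega
  -- the sign of a subset
  set ε : {s : Finset (Fin (i + j)) // s.card = i} → R :=
    fun s => ((Equiv.Perm.sign (shuffle s.1 s.2 (hcardc s.1 s.2)) : ℤ) : R) with hε
  have hεε : ∀ s, ε s * ε s = 1 := by
    intro s
    rcases Int.units_eq_one_or (Equiv.Perm.sign (shuffle s.1 s.2 (hcardc s.1 s.2))) with h | h <;>
      simp [hε, h]
  have hwedge : ∀ s : {s : Finset (Fin (i + j)) // s.card = i},
      W (fam b i s) (fam b j ⟨s.1ᶜ, hcardc s.1 s.2⟩) = ε s • En b := by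
    intro s
    have := wedge_compl b s.1 s.2 (hcardc s.1 s.2)
    simpa [hW, hε] using this
  -- the candidate inverse
  set Ψ : (⋀[R]^j M →ₗ[R] ⋀[R]^(i + j) M) →ₗ[R] ⋀[R]^i M :=
    ∑ s : {s : Finset (Fin (i + j)) // s.card = i},
      LinearMap.smulRight
        (ε s • ((delta b).comp (LinearMap.applyₗ (fam b j ⟨s.1ᶜ, hcardc s.1 s.2⟩))))
        (fam b i s) with hΨ
  have hΨ_apply : ∀ f, Ψ f
      = ∑ s : {s : Finset (Fin (i + j)) // s.card = i},
          (ε s * delta b (f (fam b j ⟨s.1ᶜ, hcardc s.1 s.2⟩))) • fam b i s := by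
    intro f
    simp [hΨ, LinearMap.sum_apply, LinearMap.smulRight_apply, smul_smul]
  -- left inverse
  have h1 : ∀ x, Ψ (W x) = x := by
    have : Ψ.comp W = LinearMap.id := by
      apply ext_fam b i
      intro s
      rw [LinearMap.comp_apply, LinearMap.id_apply, hΨ_apply]
      rw [Fintype.sum_eq_single s]
      · rw [hwedge s]
        rw [map_smul, delta_En, smul_eq_mul, mul_one, hεε s, one_smul]
      · intro s' hs'
        have hzero : W (fam b i s) (fam b j ⟨s'.1ᶜ, hcardc s'.1 s'.2⟩) = 0 := by
          apply wedge_eq_zero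
          intro hdisj
          apply hs'
          apply Subtype.ext
          refine (Finset.eq_of_subset_of_card_le ?_ ?_).symm
          · exact (disjoint_compl_right_iff (x := s.1) (y := s'.1)).mp hdisj
          · rw [s.2, s'.2]
        rw [hzero, map_zero, mul_zero, zero_smul]
    intro x
    exact LinearMap.congr_fun this x
  -- right inverse
  have h2 : ∀ f, W (Ψ f) = f := by
    intro f
    apply ext_fam b j
    intro t
    rw [hΨ_apply, map_sum, LinearMap.sum_apply]
    rw [Fintype.sum_eq_single (⟨t.1ᶜ, hcardc' t.1 t.2⟩ : {s : Finset (Fin (i + j)) // s.card = i})]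
    · set s₀ : {s : Finset (Fin (i + j)) // s.card = i} := ⟨t.1ᶜ, hcardc' t.1 t.2⟩ with hs₀
      have hct : (⟨s₀.1ᶜ, hcardc s₀.1 s₀.2⟩ : {t : Finset (Fin (i + j)) // t.card = j}) = t := by
        apply Subtype.ext
        simp [hs₀]
      rw [map_smul, LinearMap.smul_apply]
      rw [show W (fam b i s₀) (fam b j t) = ε s₀ • En b from hct ▸ hwedge s₀]
      rw [hct]
      rw [smul_smul, mul_comm (ε s₀) _, mul_assoc, hεε s₀, mul_one]
      exact (eq_delta_smul b (f (fam b j t))).symm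
    · intro s' hs'
      have hzero : W (fam b i s') (fam b j t) = 0 := by
        apply wedge_eq_zero
        intro hdisj
        apply hs'
        apply Subtype.ext
        have hsub : s'.1 ≤ t.1ᶜ := le_compl_iff_disjoint_right.mpr hdisj
        refine Finset.eq_of_subset_of_card_le hsub ?_
        rw [s'.2, hcardc' t.1 t.2]
      rw [map_smul, LinearMap.smul_apply, hzero, smul_zero]
  rw [Function.bijective_iff_has_inverse]
  exact ⟨Ψ, h1, h2⟩
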